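/- In the setting of the discrete p_h(·)-Dirichlet problem, weak duality holds: inf over v_h in the Crouzeix–Raviart space with homogeneous Dirichlet condition of I_h^{cr}(v_h) := ∫_Ω φ_h(·,|∇_h v_h|) dx − ∫_Ω f_h Π_h v_h dx is greater than or equal to sup over y_h in the Raviart–Thomas space with zero normal trace on Γ_N of D_h^{rt}(y_h) := −∫_Ω φ_h*(·,|Π_h y_h|) dx − χ(div y_h = −f_h), where χ(P) = 0 if P holds and +∞ otherwise. -/

import Mathlib

open MeasureTheory

/-- Discrete weak duality for the discrete `p_h(·)`-Dirichlet problem: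
`inf I_h^cr ≥ sup D_h^rt`. The discrete spaces are given abstractly: `X` indexes
the Crouzeix–Raviart functions (via their element-wise gradients `gradh v` and
projections `Pv v`), `Y` the Raviart–Thomas fields (via `Py y` and `divy y`).
`φh` is the element-wise generalized N-function and `φhs` its pointwise Fenchel
conjugate, linked by the Fenchel–Young inequality `hFY`. `hIBP` is the discrete
integration-by-parts formula. The dual functional equals `⊥ = -∞` when the
constraint `div y_h = -f_h` fails, so its supremum is taken over the constrained
fields. -/
theorem stmt18 {d : ℕ} {α : Type} [MeasurableSpace α] (μ : Measure α)
    (X Y : Type)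
    (gradh : X → α → EuclideanSpace ℝ (Fin d))
    (Pv : X → α → ℝ)
    (Py : Y → α → EuclideanSpace ℝ (Fin d))
    (divy : Y → α → ℝ)
    (fh : α → ℝ)
    (φh φhs : α → ℝ → ℝ)
    (hFY : ∀ᵐ x ∂μ, ∀ a b : EuclideanSpace ℝ (Fin d),
      (inner ℝ b a : ℝ) ≤ φhs x ‖b‖ + φh x ‖a‖)
    (hIBP : ∀ v y, (∫ x, (inner ℝ (Py y x) (gradh v x) : ℝ) ∂μ) =
      - ∫ x, Pv v x * divy y x ∂μ)
    (hI1 : ∀ v, Integrable (fun x => φh x ‖gradh v x‖) μ)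
    (hI2 : ∀ v, Integrable (fun x => fh x * Pv v x) μ)
    (hI3 : ∀ y, Integrable (fun x => φhs x ‖Py y x‖) μ)
    (hI4 : ∀ v y, Integrable (fun x => (inner ℝ (Py y x) (gradh v x) : ℝ)) μ)
    (hI5 : ∀ v y, Integrable (fun x => Pv v x * divy y x) μ) :
    (⨅ v : X, (((∫ x, φh x ‖gradh v x‖ ∂μ) - ∫ x, fh x * Pv v x ∂μ : ℝ) : EReal)) ≥
      ⨆ y : {y : Y // ∀ᵐ x ∂μ, divy y x = - fh x},
        ((-(∫ x, φhs x ‖Py y.1 x‖ ∂μ) : ℝ) : EReal) := by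
  rw [ge_iff_le]
  refine iSup_le fun y => le_iInf fun v => ?_
  rw [EReal.coe_le_coe_iff]
  have hae : ∀ᵐ x ∂μ, fh x * Pv v x = -(Pv v x * divy y.1 x) := by
    filter_upwards [y.2] with x hx
    rw [hx]; ring
  have h1 : ∫ x, fh x * Pv v x ∂μ = ∫ x, (inner ℝ (Py y.1 x) (gradh v x) : ℝ) ∂μ := by
    rw [hIBP v y.1, ← integral_neg]
    exact integral_congr_ae hae
  have h2 : ∫ x, (inner ℝ (Py y.1 x) (gradh v x) : ℝ) ∂μ ≤
      ∫ x, (φhs x ‖Py y.1 x‖ + φh x ‖gradh v x‖) ∂μ := by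
    refine integral_mono_ae (hI4 v y.1) ((hI3 y.1).add (hI1 v)) ?_
    filter_upwards [hFY] with x hx
    exact hx (gradh v x) (Py y.1 x)
  rw [integral_add (hI3 y.1) (hI1 v)] at h2
  linarith [h1 ▸ h2]
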